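/- Lagrange inversion in Bell polynomial form: let f(t) = ∑_{n≥1} f_n t^n be a formal power series over a ℚ-algebra with f_1 invertible. Then the coefficients of the compositional inverse f^{-1} satisfy (f^{-1})_1 = 1/f_1 and, for n ≥ 2 and f_1 = 1, (f^{-1})_n = (1/n!) ∑_{k=1}^{n-1} B_{n-1+k, k}(0, -2!·f_2, -3!·f_3, ...). -/

import Mathlib

open Finset PowerSeries

/-- Partial Bell polynomials `B n k`, defined by the standard recurrence
`B_{n,k} = ∑_{i=1}^{n-k+1} C(n-1, i-1) * x_i * B_{n-i, k-1}`, equivalently by the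
exponential generating function `∑ B_{n,k} u^k t^n/n! = exp (u * ∑_{j ≥ 1} x_j t^j/j!)`. -/
def bellPoly {R : Type*} [CommRing R] (x : ℕ → R) : ℕ → ℕ → R
  | 0, 0 => 1
  | 0, _+1 => 0
  | _+1, 0 => 0
  | n+1, k+1 => ∑ i ∈ Finset.range (n+1), (n.choose i : R) * x (i+1) * bellPoly x (n - i) k

/-- Composition `f ∘ g` of formal power series; this is the correct notion of
composition when `g` has zero constant coefficient (then `coeff n (g ^ k) = 0` for `k > n`). -/
noncomputable def compPS {R : Type*} [CommRing R] (f g : PowerSeries R) : PowerSeries R :=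
  PowerSeries.mk fun n =>
    ∑ k ∈ Finset.range (n + 1), (PowerSeries.coeff k f) * (PowerSeries.coeff n (g ^ k))

section Aux
variable {R : Type*} [CommRing R]

lemma coeff_pow_mul_eq_zero {ψ A : PowerSeries R} (hψ : constantCoeff ψ = 0)
    {N k : ℕ} (h : N < k) : coeff N (ψ ^ k * A) = 0 := by
  have hdvd : (X : PowerSeries R) ^ k ∣ ψ ^ k * A :=
    Dvd.dvd.mul_right (pow_dvd_pow_of_dvd (X_dvd_iff.mpr hψ) k) A
  exact X_pow_dvd_iff.mp hdvd N h

lemma coeff_pow_eq_zero {ψ : PowerSeries R} (hψ : constantCoeff ψ = 0)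
    {N k : ℕ} (h : N < k) : coeff N (ψ ^ k) = 0 := by
  simpa using coeff_pow_mul_eq_zero (A := 1) hψ h

lemma geom_split {ψ v : PowerSeries R} (hv : (1 - ψ) * v = 1) (N : ℕ) :
    v = (∑ k ∈ range (N + 1), ψ ^ k) + ψ ^ (N + 1) * v := by
  have hgs := mul_geom_sum ψ (N + 1)
  calc v = (((1 - ψ) * ∑ i ∈ range (N + 1), ψ ^ i) + ψ ^ (N + 1)) * v := by
        rw [show ((1 - ψ) * ∑ i ∈ range (N + 1), ψ ^ i) + ψ ^ (N + 1) = 1 by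
          linear_combination -hgs]
        rw [one_mul]
    _ = (∑ i ∈ range (N + 1), ψ ^ i) * ((1 - ψ) * v) + ψ ^ (N + 1) * v := by ring
    _ = _ := by rw [hv, mul_one]

lemma geom_coeff {ψ v : PowerSeries R} (hψ : constantCoeff ψ = 0)
    (hv : (1 - ψ) * v = 1) (N : ℕ) :
    coeff N v = ∑ k ∈ range (N + 1), coeff N (ψ ^ k) := by
  conv_lhs => rw [geom_split hv N]
  rw [map_add, map_sum, coeff_pow_mul_eq_zero hψ (by omega), add_zero]

lemma choose_sum_nat (n m : ℕ) :
    ∑ j ∈ range (m + 1), (n + j).choose j = (n + 1 + m).choose m := by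
  have h1 : ∀ j, (n + j).choose j = (n + j).choose n := by
    intro j
    rw [← Nat.choose_symm (Nat.le_add_right n j)]
    congr 1; omega
  calc ∑ j ∈ range (m + 1), (n + j).choose j
      = ∑ j ∈ range (m + 1), (n + j).choose n := by
        exact Finset.sum_congr rfl fun j _ => h1 j
    _ = ∑ i ∈ Ico n (n + m + 1), i.choose n := by
        rw [Finset.sum_Ico_eq_sum_range]
        apply Finset.sum_congr
        · congr 1; omega
        · intros; rfl
    _ = (n + m + 1).choose (n + 1) := by
        rw [show Ico n (n + m + 1) = Icc n (n + m) by rw [← Finset.Ico_add_one_right_eq_Icc]]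
        exact Nat.sum_Icc_choose (n + m) n
    _ = (n + 1 + m).choose m := by
        rw [show n + 1 + m = n + m + 1 by omega, ← Nat.choose_symm (by omega : n + 1 ≤ n + m + 1)]
        congr 1; omega

lemma geom_pow {ψ v : PowerSeries R} (hψ : constantCoeff ψ = 0)
    (hv : (1 - ψ) * v = 1) :
    ∀ n N : ℕ, coeff N (v ^ (n + 1)) =
      ∑ k ∈ range (N + 1), ((n + k).choose k : R) * coeff N (ψ ^ k) := by
  intro n
  induction n with
  | zero =>
    intro N
    rw [pow_one, geom_coeff hψ hv]
    exact Finset.sum_congr rfl fun k _ => by simp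
  | succ n ih =>
    intro N
    have huniform : ∀ p ≤ N, coeff p (v ^ (n + 1)) =
        ∑ j ∈ range (N + 1), ((n + j).choose j : R) * coeff p (ψ ^ j) := by
      intro p hp
      rw [ih p]
      apply Finset.sum_subset
      · intro j hj; simp only [Finset.mem_range] at *; omega
      · intro j hj hj2
        have hpj : p < j := by
          simp only [Finset.mem_range] at hj hj2; omega
        rw [coeff_pow_eq_zero hψ hpj, mul_zero]
    have hmulψ : ∀ k : ℕ, coeff N (v ^ (n + 1) * ψ ^ k) =
        ∑ j ∈ range (N + 1), ((n + j).choose j : R) * coeff N (ψ ^ (j + k)) := by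
      intro k
      rw [coeff_mul]
      rw [Finset.sum_congr rfl (fun pq hpq => ?_), Finset.sum_comm]
      · refine Finset.sum_congr rfl fun j _ => ?_
        rw [← Finset.mul_sum, pow_add, coeff_mul]
      · have hple : pq.1 ≤ N := by
          have := Finset.HasAntidiagonal.mem_antidiagonal.mp hpq; omega
        rw [huniform pq.1 hple, Finset.sum_mul]
        exact Finset.sum_congr rfl fun j _ => by ring
    have hsplit : coeff N (v ^ (n + 2)) =
        ∑ k ∈ range (N + 1), coeff N (v ^ (n + 1) * ψ ^ k) := by
      have hv2 : v ^ (n + 2) = v ^ (n + 1) * ((∑ k ∈ range (N + 1), ψ ^ k) + ψ ^ (N + 1) * v) := by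
        rw [← geom_split hv N, pow_succ]
      rw [hv2, mul_add, map_add, Finset.mul_sum, map_sum]
      have hz : coeff N (v ^ (n + 1) * (ψ ^ (N + 1) * v)) = 0 := by
        rw [show v ^ (n + 1) * (ψ ^ (N + 1) * v) = ψ ^ (N + 1) * (v ^ (n + 1) * v) by ring]
        exact coeff_pow_mul_eq_zero hψ (by omega)
      rw [hz, add_zero]
    rw [hsplit]
    calc ∑ k ∈ range (N + 1), coeff N (v ^ (n + 1) * ψ ^ k)
        = ∑ k ∈ range (N + 1), ∑ j ∈ range (N + 1),
            ((n + j).choose j : R) * coeff N (ψ ^ (j + k)) :=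
          Finset.sum_congr rfl fun k _ => hmulψ k
      _ = ∑ j ∈ range (N + 1), ∑ k ∈ range (N + 1),
            ((n + j).choose j : R) * coeff N (ψ ^ (j + k)) := Finset.sum_comm
      _ = ∑ j ∈ range (N + 1), ∑ m ∈ Ico j (N + 1),
            ((n + j).choose j : R) * coeff N (ψ ^ m) := by
          refine Finset.sum_congr rfl fun j hj => ?_
          have hjN : j ≤ N := by simp only [Finset.mem_range] at hj; omega
          rw [Finset.sum_Ico_eq_sum_range]
          have : ∑ k ∈ range (N + 1), ((n + j).choose j : R) * coeff N (ψ ^ (j + k))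
              = ∑ k ∈ range (N + 1 - j), ((n + j).choose j : R) * coeff N (ψ ^ (j + k)) := by
            rw [← Finset.sum_subset (Finset.range_subset_range.mpr (by omega : N + 1 - j ≤ N + 1))]
            intro k hk hk2
            have : N < j + k := by
              simp only [Finset.mem_range] at hk hk2; omega
            rw [coeff_pow_eq_zero hψ this, mul_zero]
          rw [this]
      _ = ∑ m ∈ range (N + 1), ∑ j ∈ Ico 0 (m + 1),
            ((n + j).choose j : R) * coeff N (ψ ^ m) := by
          rw [range_eq_Ico]
          rw [show (Ico 0 (N+1)) = Ico 0 (N+1) from rfl]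
          exact Finset.sum_Ico_Ico_comm 0 (N + 1) _
      _ = ∑ m ∈ range (N + 1), ((n + 1 + m).choose m : R) * coeff N (ψ ^ m) := by
          refine Finset.sum_congr rfl fun m _ => ?_
          rw [← Finset.sum_mul, show Ico 0 (m + 1) = range (m + 1) by rw [range_eq_Ico],
            ← Nat.cast_sum, choose_sum_nat]

end Aux

lemma nat_cast_mul_eq_smul {R : Type*} [CommRing R] [Algebra ℚ R] (m : ℕ) (y : R) :
    (m : R) * y = (m : ℚ) • y := by
  rw [Algebra.smul_def, map_natCast]

lemma bell_coeff {R : Type*} [CommRing R] [Algebra ℚ R] (h : PowerSeries R)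
    (h0 : constantCoeff h = 0) (x : ℕ → R)
    (hx : ∀ j : ℕ, x (j + 1) = ((j + 1).factorial : R) * coeff (j + 1) h) :
    ∀ k n : ℕ, bellPoly x n k =
      ((n.factorial : ℚ) / (k.factorial : ℚ)) • coeff n (h ^ k) := by
  intro k
  induction k with
  | zero =>
    intro n
    match n with
    | 0 => simp [bellPoly]
    | n + 1 =>
      show (0 : R) = _
      rw [pow_zero, coeff_one, if_neg (by omega), smul_zero]
  | succ k ih =>
    intro n
    match n with
    | 0 =>
      show (0 : R) = _
      have hc : coeff 0 (h ^ (k + 1)) = 0 := by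
        rw [coeff_zero_eq_constantCoeff, map_pow, h0, zero_pow (by omega)]
      rw [hc, smul_zero]
    | n + 1 =>
      show ∑ i ∈ range (n + 1), (n.choose i : R) * x (i + 1) * bellPoly x (n - i) k = _
      have step1 : ∀ i ∈ range (n + 1),
          (n.choose i : R) * x (i + 1) * bellPoly x (n - i) k
          = ((n.factorial : ℚ) / (k.factorial : ℚ)) •
              (coeff i ((d⁄dX R) h) * coeff (n - i) (h ^ k)) := by
        intro i hi
        have hin : i ≤ n := by simp only [Finset.mem_range] at hi; omega
        have hnat : (n.choose i) * (i + 1).factorial * (n - i).factorial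
            = n.factorial * (i + 1) := by
          rw [Nat.factorial_succ]
          calc n.choose i * ((i + 1) * i.factorial) * (n - i).factorial
              = (i + 1) * (n.choose i * i.factorial * (n - i).factorial) := by ring
            _ = (i + 1) * n.factorial := by
                rw [Nat.choose_mul_factorial_mul_factorial hin]
            _ = n.factorial * (i + 1) := by ring
        rw [hx i, ih (n - i), coeff_derivative]
        rw [mul_smul_comm]
        rw [show (n.choose i : R) * (((i + 1).factorial : R) * coeff (i + 1) h)
              * coeff (n - i) (h ^ k)
            = ((n.choose i * (i + 1).factorial : ℕ) : R)
              * (coeff (i + 1) h * coeff (n - i) (h ^ k)) by push_cast; ring]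
        rw [nat_cast_mul_eq_smul, smul_smul]
        rw [show coeff (i + 1) h * ((i : R) + 1) * coeff (n - i) (h ^ k)
            = ((i + 1 : ℕ) : R) * (coeff (i + 1) h * coeff (n - i) (h ^ k)) by
          push_cast; ring]
        rw [nat_cast_mul_eq_smul, smul_smul]
        congr 1
        have hq : ((n.choose i * (i + 1).factorial * (n - i).factorial : ℕ) : ℚ)
            = ((n.factorial * (i + 1) : ℕ) : ℚ) := by exact_mod_cast congrArg Nat.cast hnat
        push_cast at hq ⊢
        have hk0 : (k.factorial : ℚ) ≠ 0 := by positivity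
        field_simp
        linear_combination hq
      rw [Finset.sum_congr rfl step1, ← Finset.smul_sum]
      have hconv : ∑ i ∈ range (n + 1), coeff i ((d⁄dX R) h) * coeff (n - i) (h ^ k)
          = coeff n ((d⁄dX R) h * h ^ k) := by
        rw [coeff_mul, Finset.Nat.sum_antidiagonal_eq_sum_range_succ_mk]
      rw [hconv]
      have hd : (k + 1) • (h ^ k * (d⁄dX R) h) = (d⁄dX R) (h ^ (k + 1)) := by
        rw [Derivation.leibniz_pow]
        simp [smul_eq_mul]
      have hkey : ((k + 1 : ℕ) : ℚ) • coeff n (h ^ k * (d⁄dX R) h)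
          = coeff (n + 1) (h ^ (k + 1)) * ((n : R) + 1) := by
        rw [Nat.cast_smul_eq_nsmul, ← map_nsmul, hd, coeff_derivative]
      have hcm : (d⁄dX R) h * h ^ k = h ^ k * (d⁄dX R) h := mul_comm _ _
      rw [hcm]
      have hz : coeff n (h ^ k * (d⁄dX R) h)
          = ((k + 1 : ℚ))⁻¹ • (coeff (n + 1) (h ^ (k + 1)) * ((n : R) + 1)) := by
        rw [← hkey, smul_smul]
        rw [show ((k + 1 : ℚ))⁻¹ * ((k + 1 : ℕ) : ℚ) = 1 by push_cast; field_simp]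
        rw [one_smul]
      rw [hz, smul_smul]
      rw [show coeff (n + 1) (h ^ (k + 1)) * ((n : R) + 1)
          = ((n + 1 : ℕ) : R) * coeff (n + 1) (h ^ (k + 1)) by push_cast; ring]
      rw [nat_cast_mul_eq_smul, smul_smul]
      congr 1
      rw [Nat.factorial_succ (n), Nat.factorial_succ (k)]
      push_cast
      have h1 : (k.factorial : ℚ) ≠ 0 := by positivity
      have h2 : ((k : ℚ) + 1) ≠ 0 := by positivity
      field_simp

section Aux2
variable {R : Type*} [CommRing R]

lemma qsmul_cancel {R : Type*} [CommRing R] [Algebra ℚ R] {m : ℕ} (hm : m ≠ 0)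
    {x : R} (h : (m : ℚ) • x = 0) : x = 0 := by
  have h2 : ((m : ℚ)⁻¹ * (m : ℚ)) • x = 0 := by rw [mul_smul, h, smul_zero]
  rwa [inv_mul_cancel₀ (by exact_mod_cast hm), one_smul] at h2

lemma lemD {R : Type*} [CommRing R] [Algebra ℚ R] {f u v : PowerSeries R}
    (hfu : f = X * u) (huv : u * v = 1) (q : ℕ) :
    coeff (q + 1) (v ^ (q + 2) * (d⁄dX R) f) = 0 := by
  set Du := (d⁄dX R) u with hDu
  have hdf : (d⁄dX R) f = X * Du + u := by
    rw [hfu, Derivation.leibniz]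
    simp [smul_eq_mul, hDu]
  have h0 : u * (d⁄dX R) v + v * Du = 0 := by
    have h := Derivation.leibniz (d⁄dX R) u v
    rw [huv, Derivation.map_one_eq_zero] at h
    simpa [smul_eq_mul] using h.symm
  have hdv : (d⁄dX R) v = -(v ^ 2 * Du) := by
    linear_combination v * h0 - ((d⁄dX R) v) * huv
  have hdvp : (d⁄dX R) (v ^ (q + 1)) = -((q + 1) • (Du * v ^ (q + 2))) := by
    rw [Derivation.leibniz_pow]
    simp only [smul_eq_mul, Nat.add_sub_cancel]
    rw [hdv, show v ^ q * -(v ^ 2 * Du) = -(Du * v ^ (q + 2)) by ring, smul_neg]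
  have e1 : coeff q ((d⁄dX R) (v ^ (q + 1))) = coeff (q + 1) (v ^ (q + 1)) * ((q : R) + 1) :=
    coeff_derivative _ q
  have e2 : coeff q ((d⁄dX R) (v ^ (q + 1))) = -((q + 1) • coeff q (Du * v ^ (q + 2))) := by
    rw [hdvp, map_neg, map_nsmul]
  have e3 : (q + 1) • coeff q (Du * v ^ (q + 2))
      = -(coeff (q + 1) (v ^ (q + 1)) * ((q : R) + 1)) := by
    have h := e2.symm.trans e1
    rw [← h, neg_neg]
  have hsplit : v ^ (q + 2) * (d⁄dX R) f = X * (Du * v ^ (q + 2)) + v ^ (q + 1) := by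
    rw [hdf]
    have h1 : v ^ (q + 2) * u = v ^ (q + 1) := by
      calc v ^ (q + 2) * u = v ^ (q + 1) * (u * v) := by ring
        _ = v ^ (q + 1) := by rw [huv, mul_one]
    calc v ^ (q + 2) * (X * Du + u) = X * (Du * v ^ (q + 2)) + v ^ (q + 2) * u := by ring
      _ = _ := by rw [h1]
  have hc : coeff (q + 1) (v ^ (q + 2) * (d⁄dX R) f)
      = coeff q (Du * v ^ (q + 2)) + coeff (q + 1) (v ^ (q + 1)) := by
    rw [hsplit, map_add, coeff_succ_X_mul]
  have hqs : ((q + 1 : ℕ) : ℚ) • coeff (q + 1) (v ^ (q + 2) * (d⁄dX R) f) = 0 := by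
    rw [hc, smul_add, Nat.cast_smul_eq_nsmul, Nat.cast_smul_eq_nsmul, e3, nsmul_eq_mul]
    push_cast
    ring
  exact qsmul_cancel (Nat.succ_ne_zero q) hqs

lemma lagrange_core {R : Type*} [CommRing R] [Algebra ℚ R]
    (f g u v : PowerSeries R) (hfu : f = X * u) (huv : u * v = 1)
    (hv0 : constantCoeff v = 1)
    (hcomp : compPS g f = X)
    (hdf0 : constantCoeff ((d⁄dX R) f) = 1)
    {n : ℕ} (hn : 1 ≤ n) :
    coeff (n - 1) (v ^ n) = (n : R) * coeff n g := by
  have hf0 : constantCoeff f = 0 := by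
    rw [hfu, map_mul, constantCoeff_X, zero_mul]
  set dF := (d⁄dX R) f with hdF
  -- the series T = ∑_m m g_m f^(m-1) dF equals 1
  have hT : PowerSeries.mk (fun N => ∑ m ∈ Icc 1 (N + 1),
      (m : R) * coeff m g * coeff N (f ^ (m - 1) * dF)) = 1 := by
    ext N
    rw [coeff_mk]
    have hterm : ∀ m ∈ Icc 1 (N + 1),
        (m : R) * coeff m g * coeff N (f ^ (m - 1) * dF)
        = coeff m g * coeff (N + 1) (f ^ m) * ((N : R) + 1) := by
      intro m hm
      have hm1 : 1 ≤ m := (Finset.mem_Icc.mp hm).1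
      have hdfm : (d⁄dX R) (f ^ m) = m • (f ^ (m - 1) * dF) := by
        rw [Derivation.leibniz_pow]
        simp [smul_eq_mul, hdF]
      have h2 : coeff N ((d⁄dX R) (f ^ m)) = (m : R) * coeff N (f ^ (m - 1) * dF) := by
        rw [hdfm, map_nsmul, nsmul_eq_mul]
      have h3 : coeff N ((d⁄dX R) (f ^ m)) = coeff (N + 1) (f ^ m) * ((N : R) + 1) :=
        coeff_derivative _ N
      calc (m : R) * coeff m g * coeff N (f ^ (m - 1) * dF)
          = coeff m g * ((m : R) * coeff N (f ^ (m - 1) * dF)) := by ring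
        _ = coeff m g * (coeff (N + 1) (f ^ m) * ((N : R) + 1)) := by rw [← h2, h3]
        _ = _ := by ring
    rw [Finset.sum_congr rfl hterm, ← Finset.sum_mul]
    have hIcc : ∑ m ∈ Icc 1 (N + 1), coeff m g * coeff (N + 1) (f ^ m)
        = coeff (N + 1) (compPS g f) := by
      rw [compPS, coeff_mk, Finset.sum_range_succ', pow_zero, coeff_one,
        if_neg (Nat.succ_ne_zero N), mul_zero, add_zero]
      rw [show Icc 1 (N + 1) = Ico 1 (N + 2) by rw [← Finset.Ico_add_one_right_eq_Icc]; rfl,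
        Finset.sum_Ico_eq_sum_range]
      exact Finset.sum_congr rfl fun i _ => by rw [add_comm 1 i]
    rw [hIcc, hcomp, coeff_X, coeff_one]
    cases N with
    | zero => norm_num
    | succ N => simp
  -- main computation
  have step1 : coeff (n - 1) (v ^ n) = ∑ m ∈ Icc 1 n,
      (m : R) * coeff m g * coeff (n - 1) (v ^ n * (f ^ (m - 1) * dF)) := by
    conv_lhs => rw [← mul_one (v ^ n), ← hT]
    rw [coeff_mul]
    have hext : ∀ pq ∈ antidiagonal (n - 1),
        coeff pq.1 (v ^ n) * coeff pq.2 (PowerSeries.mk (fun N => ∑ m ∈ Icc 1 (N + 1),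
          (m : R) * coeff m g * coeff N (f ^ (m - 1) * dF)))
        = ∑ m ∈ Icc 1 n, coeff pq.1 (v ^ n) *
            ((m : R) * coeff m g * coeff pq.2 (f ^ (m - 1) * dF)) := by
      intro pq hpq
      have hq : pq.2 ≤ n - 1 := by
        have := Finset.HasAntidiagonal.mem_antidiagonal.mp hpq; omega
      rw [coeff_mk, Finset.mul_sum]
      apply Finset.sum_subset
      · intro m hm
        simp only [Finset.mem_Icc] at hm ⊢
        omega
      · intro m hm hm2
        have hlt : pq.2 < m - 1 := by
          simp only [Finset.mem_Icc] at hm hm2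
          omega
        rw [coeff_pow_mul_eq_zero hf0 hlt]
        ring
    rw [Finset.sum_congr rfl hext, Finset.sum_comm]
    refine Finset.sum_congr rfl fun m _ => ?_
    rw [coeff_mul, Finset.mul_sum]
    exact Finset.sum_congr rfl fun pq _ => by ring
  have step2 : ∀ m ∈ Icc 1 n,
      coeff (n - 1) (v ^ n * (f ^ (m - 1) * dF))
      = coeff (n - m) (v ^ (n - m + 1) * dF) := by
    intro m hm
    obtain ⟨hm1, hmn⟩ := Finset.mem_Icc.mp hm
    have hvu : v ^ n * u ^ (m - 1) = v ^ (n - m + 1) := by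
      have hsum : (n - m + 1) + (m - 1) = n := by omega
      calc v ^ n * u ^ (m - 1) = v ^ ((n - m + 1) + (m - 1)) * u ^ (m - 1) := by rw [hsum]
        _ = v ^ (n - m + 1) * (v * u) ^ (m - 1) := by rw [pow_add]; ring
        _ = v ^ (n - m + 1) := by rw [mul_comm v u, huv, one_pow, mul_one]
    have hrw : v ^ n * (f ^ (m - 1) * dF) = X ^ (m - 1) * (v ^ (n - m + 1) * dF) := by
      conv_lhs => rw [hfu, mul_pow]
      calc v ^ n * (X ^ (m - 1) * u ^ (m - 1) * dF)
          = X ^ (m - 1) * ((v ^ n * u ^ (m - 1)) * dF) := by ring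
        _ = _ := by rw [hvu]
    rw [hrw, show n - 1 = (n - m) + (m - 1) by omega, coeff_X_pow_mul]
  have step2' : ∀ m ∈ Icc 1 n,
      (m : R) * coeff m g * coeff (n - 1) (v ^ n * (f ^ (m - 1) * dF))
      = (m : R) * coeff m g * coeff (n - m) (v ^ (n - m + 1) * dF) :=
    fun m hm => by rw [step2 m hm]
  rw [step1, Finset.sum_congr rfl step2']
  rw [Finset.sum_eq_single_of_mem n (Finset.mem_Icc.mpr ⟨hn, le_rfl⟩)]
  · rw [Nat.sub_self, pow_one, coeff_zero_eq_constantCoeff, map_mul, hv0, hdf0]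
    ring
  · intro m hm hmn
    obtain ⟨hm1, hmn'⟩ := Finset.mem_Icc.mp hm
    obtain ⟨q, hq⟩ : ∃ q, n - m = q + 1 := ⟨n - m - 1, by omega⟩
    rw [hq, show q + 1 + 1 = q + 2 by omega, lemD hfu huv q]
    ring

end Aux2

/-- Lagrange inversion in Bell polynomial form, for a series tangent to
identity (`f₁ = 1`): the compositional inverse `g = f⁻¹` satisfies `g₁ = 1 = 1/f₁`
and, for `n ≥ 2`, `gₙ = (1/n!) ∑_(k=1)^(n-1) B_(n-1+k),k (0, -2!·f₂, -3!·f₃, …)`. -/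
theorem lagrange_inversion_bell {R : Type*} [CommRing R] [Algebra ℚ R]
    (f g : PowerSeries R) (hf0 : constantCoeff f = 0) (hf1 : coeff 1 f = 1)
    (hg0 : constantCoeff g = 0)
    (hinv : compPS f g = X) (hinv' : compPS g f = X) :
    coeff 1 g = 1 ∧
    ∀ n, 2 ≤ n → coeff n g = (n.factorial : ℚ)⁻¹ •
      ∑ k ∈ Finset.Icc 1 (n - 1),
        bellPoly (fun j => if j = 1 then 0 else -((j.factorial : R) * coeff j f))
          (n - 1 + k) k := by
  constructor
  · have h := congrArg (coeff 1) hinv'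
    rw [compPS, coeff_mk, coeff_X, if_pos rfl] at h
    rw [Finset.sum_range_succ, Finset.sum_range_one, pow_zero, pow_one, coeff_one,
      if_neg one_ne_zero, mul_zero, zero_add, hf1, mul_one] at h
    exact h
  intro n hn
  -- setup
  set u : PowerSeries R := PowerSeries.mk fun j => coeff (j + 1) f with hu
  have hfu : f = X * u := by
    ext m
    cases m with
    | zero =>
      rw [coeff_zero_eq_constantCoeff_apply, hf0, coeff_zero_eq_constantCoeff_apply,
        map_mul, constantCoeff_X, zero_mul]
    | succ m => rw [coeff_succ_X_mul, hu, coeff_mk]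
  have hu0 : constantCoeff u = 1 := by
    rw [← coeff_zero_eq_constantCoeff_apply, hu, coeff_mk, hf1]
  set v : PowerSeries R := u.invOfUnit 1 with hv
  have huv : u * v = 1 := PowerSeries.mul_invOfUnit u 1 (by rw [hu0, Units.val_one])
  have hv0 : constantCoeff v = 1 := by
    have h := congrArg (constantCoeff) huv
    rwa [map_mul, hu0, one_mul, map_one] at h
  set ψ : PowerSeries R := 1 - u with hψ
  have hψ0 : constantCoeff ψ = 0 := by rw [hψ, map_sub, map_one, hu0, sub_self]
  have hψv : (1 - ψ) * v = 1 := by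
    rw [hψ, show (1 : PowerSeries R) - (1 - u) = u by ring]; exact huv
  have hXf : X - f = X * ψ := by rw [hψ, hfu]; ring
  have hXf0 : constantCoeff (X - f) = 0 := by
    rw [map_sub, constantCoeff_X, hf0, sub_zero]
  have hdf0 : constantCoeff ((d⁄dX R) f) = 1 := by
    rw [← coeff_zero_eq_constantCoeff_apply, coeff_derivative, hf1]
    norm_num
  -- Bell side
  have hx : ∀ j : ℕ, (fun j => if j = 1 then 0 else -((j.factorial : R) * coeff j f)) (j + 1)
      = ((j + 1).factorial : R) * coeff (j + 1) (X - f) := by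
    intro j
    cases j with
    | zero => simp [map_sub, coeff_X, hf1]
    | succ j =>
      simp only [show j + 1 + 1 ≠ 1 by omega, if_neg, if_false]
      rw [map_sub, coeff_X, if_neg (by omega)]
      ring
  have hbell := bell_coeff (X - f) hXf0
    (fun j => if j = 1 then 0 else -((j.factorial : R) * coeff j f)) hx
  have hXfpow : ∀ k : ℕ, coeff (n - 1 + k) ((X - f) ^ k) = coeff (n - 1) (ψ ^ k) := by
    intro k
    rw [hXf, mul_pow, coeff_X_pow_mul]
  have hRHS : ∀ k ∈ Icc 1 (n - 1),
      bellPoly (fun j => if j = 1 then 0 else -((j.factorial : R) * coeff j f)) (n - 1 + k) k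
      = (((n - 1 + k).factorial : ℚ) / (k.factorial : ℚ)) • coeff (n - 1) (ψ ^ k) := by
    intro k _
    rw [hbell k (n - 1 + k), hXfpow k]
  -- Lagrange + geometric side
  have hcore := lagrange_core f g u v hfu huv hv0 hinv' hdf0 (show 1 ≤ n by omega)
  have hgeom : coeff (n - 1) (v ^ n)
      = ∑ k ∈ range n, ((n - 1 + k).choose k : R) * coeff (n - 1) (ψ ^ k) := by
    have h := geom_pow hψ0 hψv (n - 1) (n - 1)
    rwa [show n - 1 + 1 = n by omega] at h
  have hIcoIcc : Ico 1 n = Icc 1 (n - 1) := by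
    rw [← Finset.Ico_add_one_right_eq_Icc]; congr 1; omega
  have hsplit : ∑ k ∈ range n, ((n - 1 + k).choose k : R) * coeff (n - 1) (ψ ^ k)
      = ∑ k ∈ Icc 1 (n - 1), ((n - 1 + k).choose k : R) * coeff (n - 1) (ψ ^ k) := by
    rw [range_eq_Ico, Finset.sum_eq_sum_Ico_succ_bot (by omega : 0 < n), zero_add, hIcoIcc]
    rw [pow_zero, coeff_one, if_neg (by omega : ¬ n - 1 = 0), mul_zero, zero_add]
  have hng : (n : R) * coeff n g
      = ∑ k ∈ Icc 1 (n - 1), ((n - 1 + k).choose k : R) * coeff (n - 1) (ψ ^ k) := by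
    rw [← hcore, hgeom, hsplit]
  -- final scalar manipulation
  have hcast : coeff n g = (n : ℚ)⁻¹ • ((n : R) * coeff n g) := by
    rw [nat_cast_mul_eq_smul, smul_smul, inv_mul_cancel₀
      (show (n : ℚ) ≠ 0 by exact_mod_cast (by omega : n ≠ 0)), one_smul]
  rw [hcast, hng, Finset.sum_congr rfl hRHS, Finset.smul_sum, Finset.smul_sum]
  refine Finset.sum_congr rfl fun k hk => ?_
  rw [nat_cast_mul_eq_smul, smul_smul, smul_smul]
  congr 1
  -- (n)⁻¹ * C(n-1+k,k) = (n!)⁻¹ * ((n-1+k)!/k!)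
  have hfact : (((n - 1 + k).choose k : ℕ) : ℚ) * (k.factorial : ℚ) * ((n - 1).factorial : ℚ)
      = ((n - 1 + k).factorial : ℚ) := by
    have h := Nat.choose_mul_factorial_mul_factorial (show k ≤ n - 1 + k by omega)
    rw [show n - 1 + k - k = n - 1 by omega] at h
    exact_mod_cast congrArg (Nat.cast : ℕ → ℚ) h
  have hnfact : (n.factorial : ℚ) = (n : ℚ) * ((n - 1).factorial : ℚ) := by
    have h := Nat.mul_factorial_pred (show n ≠ 0 by omega)
    exact_mod_cast (congrArg (Nat.cast : ℕ → ℚ) h).symm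
  have hn0 : (n : ℚ) ≠ 0 := by exact_mod_cast (by omega : n ≠ 0)
  have hk0 : (k.factorial : ℚ) ≠ 0 := by positivity
  have hnf0 : (n.factorial : ℚ) ≠ 0 := by positivity
  have hc0 : (((n - 1).factorial : ℕ) : ℚ) ≠ 0 := by positivity
  rw [← hfact, hnfact]
  field_simp
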